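/- Let m be an integer and for each i ∈ ℕ let mᵢ ∈ {0,1,2,3} be the i-th digit of the 4-adic expansion of m, i.e. mᵢ = ⌊m/4^i⌋ mod 4 using floored division (so for m ≥ 0 almost all mᵢ = 0, and for m < 0 almost all mᵢ = 3). Then: (a) if some digit mᵢ belongs to {1,2}, there exists n ∈ ℕ with ψ̄ⁿ(T^m) = T; (b) if every digit mᵢ belongs to {0,3} and m ≥ 0, there exists n ∈ ℕ with ψ̄ⁿ(T^m) = 1; (c) if every digit mᵢ belongs to {0,3} and m < 0, there exists n ∈ ℕ with ψ̄ⁿ(T^m) = T⁻¹. -/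
import Mathlib


noncomputable section

/-- The action of `Equiv.Perm X` on `X → G` by permuting coordinates. -/
def permAut (X G : Type) [Group G] : Equiv.Perm X →* MulAut (X → G) where
  toFun σ :=
  { toFun := fun f => f ∘ ⇑σ⁻¹
    invFun := fun f => f ∘ ⇑σ
    left_inv := fun f => by funext x; simp
    right_inv := fun f => by funext x; simp
    map_mul' := fun f g => rfl }
  map_one' := by ext f x; simp
  map_mul' := fun σ τ => by
    ext f x
    simp [Function.comp, mul_inv_rev]

/-- The wreath product `G ≀ C₂` with base alphabet `Bool`. -/
abbrev Wr (G : Type) [Group G] := (Bool → G) ⋊[permAut Bool G] Equiv.Perm Bool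

/-- `pair g₀ g₁` is the element `⟨g₀, g₁⟩` of the base group. -/
def pair {G : Type} [Group G] (g₀ g₁ : G) : Bool → G := fun x => bif x then g₁ else g₀

/-- The nontrivial element of `Sym({0,1})`. -/
def σswap : Equiv.Perm Bool := Equiv.swap false true

namespace Rabbit

/-- The free group on two generators `S`, `T`. -/
abbrev F := FreeGroup Bool

def Sg : F := FreeGroup.of false
def Tg : F := FreeGroup.of true

/-- The wreath recursion `Φ(T) = ⟨1, S⁻¹T⁻¹⟩σ`, `Φ(S) = ⟨T, 1⟩`. -/
def Phi : F →* Wr F := FreeGroup.lift fun x =>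
  if x then ⟨pair 1 (Sg⁻¹ * Tg⁻¹), σswap⟩ else ⟨pair Tg 1, 1⟩

/-- The section `g|ₓ`. -/
def sec (g : F) (x : Bool) : F := (Phi g).left x

/-- `Φ(g)` is inactive. -/
def inactive (g : F) : Prop := (Phi g).right = 1

open scoped Classical in
/-- The map `ψ̄`. -/
def psibar (g : F) : F := if inactive g then sec g false else Tg * sec g false

def ag : F := Sg⁻¹ * Tg⁻¹

lemma pair_mul {G : Type} [Group G] (g₀ g₁ h₀ h₁ : G) :
    pair g₀ g₁ * pair h₀ h₁ = pair (g₀*h₀) (g₁*h₁) := by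
  funext x; cases x <;> rfl
lemma pair_zpow {G : Type} [Group G] (g₀ g₁ : G) (k : ℤ) :
    pair g₀ g₁ ^ k = pair (g₀^k) (g₁^k) := by
  funext x; cases x <;> rfl
lemma pair_one {G : Type} [Group G] : pair (1:G) 1 = 1 := by
  funext x; cases x <;> rfl
lemma swap_pair {G : Type} [Group G] (g₀ g₁ : G) :
    permAut Bool G σswap (pair g₀ g₁) = pair g₁ g₀ := by
  funext x; cases x <;> simp [permAut, σswap, pair]
lemma one_pair {G : Type} [Group G] (g₀ g₁ : G) :
    permAut Bool G 1 (pair g₀ g₁) = pair g₀ g₁ := by simp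
lemma sswap_sq : σswap * σswap = 1 := by simp [σswap]
lemma sswap_ne_one : σswap ≠ 1 := by
  intro h
  have := congrArg (fun e : Equiv.Perm Bool => e false) h
  simp [σswap] at this
lemma phiT : Phi Tg = ⟨pair 1 ag, σswap⟩ := by simp [Phi, Tg, ag]
lemma phiS : Phi Sg = ⟨pair Tg 1, 1⟩ := by simp [Phi, Sg]

lemma mk_mul (f g : Bool → F) (s t : Equiv.Perm Bool)  :
    (⟨f, s⟩ * ⟨g, t⟩ : Wr F) = ⟨f * permAut Bool F s g, s * t⟩ := rfl

lemma phiA : Phi ag = ⟨pair Sg 1, σswap⟩ := by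
  have h1 : Phi (Tg * Sg) = ⟨pair 1 Sg⁻¹, σswap⟩ := by
    rw [map_mul, phiT, phiS, mk_mul, swap_pair, pair_mul]
    simp [ag, mul_assoc]
  have h2 : Phi (Tg * Sg) * ⟨pair Sg 1, σswap⟩ = 1 := by
    rw [h1, mk_mul, swap_pair, pair_mul, sswap_sq]
    show (⟨pair (1*1) (Sg⁻¹*Sg), 1⟩ : Wr F) = 1
    rw [mul_one, inv_mul_cancel, pair_one]
    rfl
  have h3 : ag = (Tg * Sg)⁻¹ := by rw [mul_inv_rev]; rfl
  rw [h3, map_inv]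
  exact inv_eq_of_mul_eq_one_right h2


lemma mk_eq_inl (f : Bool → F) : (⟨f, 1⟩ : Wr F) = SemidirectProduct.inl f := rfl

lemma inl_zpow (f : Bool → F) (k : ℤ) :
    (⟨f, 1⟩ : Wr F) ^ k = ⟨f ^ k, 1⟩ := by
  rw [mk_eq_inl, ← map_zpow, mk_eq_inl]

lemma phiT2 : Phi (Tg ^ (2:ℤ)) = ⟨pair ag ag, 1⟩ := by
  have : Tg ^ (2:ℤ) = Tg * Tg := by rw [zpow_two]
  rw [this, map_mul, phiT, mk_mul, swap_pair, pair_mul, sswap_sq, one_mul, mul_one]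

lemma phiTpow (k : ℤ) : Phi (Tg ^ (2*k)) = ⟨pair (ag^k) (ag^k), 1⟩ := by
  rw [zpow_mul, map_zpow, phiT2, inl_zpow, pair_zpow]

lemma phiA2 : Phi (ag ^ (2:ℤ)) = ⟨pair Sg Sg, 1⟩ := by
  have : ag ^ (2:ℤ) = ag * ag := by rw [zpow_two]
  rw [this, map_mul, phiA, mk_mul, swap_pair, pair_mul, sswap_sq, one_mul, mul_one]

lemma phiApow (j : ℤ) : Phi (ag ^ (2*j)) = ⟨pair (Sg^j) (Sg^j), 1⟩ := by
  rw [zpow_mul, map_zpow, phiA2, inl_zpow, pair_zpow]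

lemma phiSpow (j : ℤ) : Phi (Sg ^ j) = ⟨pair (Tg^j) 1, 1⟩ := by
  rw [map_zpow, phiS, inl_zpow, pair_zpow, one_zpow]

-- psibar evaluation helpers
lemma psibar_inactive (g : F) (f : Bool → F)
    (h : Phi g = ⟨f, 1⟩) : psibar g = f false := by
  rw [psibar, if_pos]
  · rw [sec, h]
  · rw [inactive, h]

lemma psibar_active (g : F) (f : Bool → F)
    (h : Phi g = ⟨f, σswap⟩) : psibar g = Tg * f false := by
  rw [psibar, if_neg]
  · rw [sec, h]
  · rw [inactive, h]; exact sswap_ne_one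

lemma p1 (k : ℤ) : psibar (Tg^(2*k)) = ag^k :=
  psibar_inactive _ _ (phiTpow k) |>.trans rfl

lemma p2 (k : ℤ) : psibar (Tg^(2*k+1)) = Tg * ag^k := by
  have h : Phi (Tg^(2*k+1)) = ⟨pair (ag^k) (ag^(k+1)), σswap⟩ := by
    rw [zpow_add, zpow_one, map_mul, phiTpow, phiT, mk_mul, one_pair, pair_mul,
      one_mul, mul_one, zpow_add, zpow_one]
  exact psibar_active _ _ h |>.trans rfl

lemma p3 (j : ℤ) : psibar (ag^(2*j)) = Sg^j :=
  psibar_inactive _ _ (phiApow j) |>.trans rfl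

lemma p4 (j : ℤ) : psibar (ag^(2*j+1)) = Tg * Sg^(j+1) := by
  have h : Phi (ag^(2*j+1)) = ⟨pair (Sg^(j+1)) (Sg^j), σswap⟩ := by
    rw [zpow_add, zpow_one, map_mul, phiApow, phiA, mk_mul, one_pair, pair_mul,
      mul_one, one_mul, zpow_add, zpow_one]
  exact psibar_active _ _ h |>.trans rfl

lemma p5 (j : ℤ) : psibar (Sg^j) = Tg^j :=
  psibar_inactive _ _ (phiSpow j) |>.trans rfl

lemma p6 (j : ℤ) : psibar (Tg * ag^(2*j)) = Tg * Sg^j := by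
  have h : Phi (Tg * ag^(2*j)) = ⟨pair (Sg^j) (ag * Sg^j), σswap⟩ := by
    rw [map_mul, phiT, phiApow, mk_mul, swap_pair, pair_mul, one_mul, mul_one]
  exact psibar_active _ _ h |>.trans rfl

lemma p7 (j : ℤ) : psibar (Tg * ag^(2*j+1)) = Sg^j := by
  have h : Phi (Tg * ag^(2*j+1)) = ⟨pair (Sg^j) (ag * Sg^(j+1)), 1⟩ := by
    rw [map_mul, phiT]
    rw [show Phi (ag^(2*j+1)) = ⟨pair (Sg^(j+1)) (Sg^j), σswap⟩ from ?_]
    · rw [mk_mul, swap_pair, pair_mul, one_mul, sswap_sq]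
    · rw [zpow_add, zpow_one, map_mul, phiApow, phiA, mk_mul, one_pair, pair_mul,
        mul_one, one_mul, zpow_add, zpow_one]
  exact psibar_inactive _ _ h |>.trans rfl

lemma p8 (j : ℤ) : psibar (Tg * Sg^j) = Tg := by
  have h : Phi (Tg * Sg^j) = ⟨pair 1 (ag * Tg^j), σswap⟩ := by
    rw [map_mul, phiT, phiSpow, mk_mul, swap_pair, pair_mul, one_mul, mul_one]
  rw [psibar_active _ _ h]
  show Tg * 1 = Tg
  rw [mul_one]

lemma psibar_T : psibar Tg = Tg := by
  have := p2 0
  rw [mul_zero, zero_add, zpow_one, zpow_zero, mul_one] at this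
  exact this

lemma psibar_one : psibar (1 : F) = 1 := by
  have := p1 0
  rw [mul_zero, zpow_zero, zpow_zero] at this
  exact this

-- 3-step lemmas
lemma step0 (q : ℤ) : psibar^[3] (Tg^(4*q)) = Tg^q := by
  have e : (4:ℤ)*q = 2*(2*q) := by ring
  rw [e]
  show psibar (psibar (psibar (Tg^(2*(2*q))))) = Tg^q
  rw [p1, p3, p5]

lemma step1 (q : ℤ) : psibar^[3] (Tg^(4*q+1)) = Tg := by
  have e : (4:ℤ)*q+1 = 2*(2*q)+1 := by ring
  rw [e]
  show psibar (psibar (psibar (Tg^(2*(2*q)+1)))) = Tg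
  rw [p2, p6, p8]

lemma step2 (q : ℤ) : psibar^[3] (Tg^(4*q+2)) = Tg := by
  have e : (4:ℤ)*q+2 = 2*(2*q+1) := by ring
  rw [e]
  show psibar (psibar (psibar (Tg^(2*(2*q+1))))) = Tg
  rw [p1, p4, p8]

lemma step3 (q : ℤ) : psibar^[3] (Tg^(4*q+3)) = Tg^q := by
  have e : (4:ℤ)*q+3 = 2*(2*q+1)+1 := by ring
  rw [e]
  show psibar (psibar (psibar (Tg^(2*(2*q+1)+1)))) = Tg^q
  rw [p2, p7, p5]

end Rabbit

/-- The `i`-th digit of the 4-adic expansion of the integer `m`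
(using floored division). -/
def digit (m : ℤ) (i : ℕ) : ℤ := (Int.fdiv m (4 ^ i)) % 4

namespace Rabbit
lemma ediv_comp (m : ℤ) (i : ℕ) : m / 4 / (4:ℤ)^i = m / 4^(i+1) := by
  set q := m / 4 / (4:ℤ)^i with hq
  have hp : (0:ℤ) < 4^i := by positivity
  have e1 : 4 * (m/4) + m % 4 = m := Int.mul_ediv_add_emod m 4
  have e2 : (4:ℤ)^i * q + (m/4) % 4^i = m/4 := Int.mul_ediv_add_emod (m/4) (4^i)
  have hr1 : 0 ≤ m % 4 := Int.emod_nonneg m (by norm_num)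
  have hr1' : m % 4 < 4 := Int.emod_lt_of_pos m (by norm_num)
  have hr2 : 0 ≤ (m/4) % 4^i := Int.emod_nonneg _ (ne_of_gt hp)
  have hr2' : (m/4) % 4^i < 4^i := Int.emod_lt_of_pos _ hp
  set t : ℤ := 4 * ((m/4) % 4^i) + m % 4 with ht
  have hm : m = t + q * 4^(i+1) := by
    rw [← e1, ← e2, pow_succ]; ring
  have ht0 : 0 ≤ t := by linarith
  have htlt : t < 4^(i+1) := by rw [pow_succ]; linarith
  have hne : ((4:ℤ)^(i+1)) ≠ 0 := by positivity
  rw [hm, Int.add_mul_ediv_right _ _ hne, Int.ediv_eq_zero_of_lt ht0 htlt, zero_add]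

lemma digit_eq (m : ℤ) (i : ℕ) : digit m i = (m / 4^i) % 4 := by
  rw [digit, Int.fdiv_eq_ediv_of_nonneg _ (by positivity)]

lemma digit_zero (m : ℤ) : digit m 0 = m % 4 := by
  rw [digit_eq]; norm_num

lemma digit_succ (m : ℤ) (i : ℕ) : digit m (i+1) = digit (m/4) i := by
  rw [digit_eq, digit_eq, ediv_comp]

lemma key03 (m : ℤ) (h : m % 4 = 0 ∨ m % 4 = 3) : psibar^[3] (Tg^m) = Tg^(m/4) := by
  rcases h with h | h
  · rw [show m = 4*(m/4) from by omega]
    rw [show (4*(m/4))/4 = m/4 from by omega]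
    exact step0 _
  · rw [show m = 4*(m/4)+3 from by omega]
    rw [show (4*(m/4)+3)/4 = m/4 from by omega]
    exact step3 _

lemma key12 (m : ℤ) (h : m % 4 = 1 ∨ m % 4 = 2) : psibar^[3] (Tg^m) = Tg := by
  rcases h with h | h
  · rw [show m = 4*(m/4)+1 from by omega]; exact step1 _
  · rw [show m = 4*(m/4)+2 from by omega]; exact step2 _

end Rabbit

open Rabbit in
theorem stmt3 (m : ℤ) :
    ((∃ i : ℕ, digit m i = 1 ∨ digit m i = 2) →
      ∃ n : ℕ, psibar^[n] (Tg ^ m) = Tg) ∧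
    ((∀ i : ℕ, digit m i = 0 ∨ digit m i = 3) → 0 ≤ m →
      ∃ n : ℕ, psibar^[n] (Tg ^ m) = 1) ∧
    ((∀ i : ℕ, digit m i = 0 ∨ digit m i = 3) → m < 0 →
      ∃ n : ℕ, psibar^[n] (Tg ^ m) = Tg⁻¹) := by
  have A : ∀ (i : ℕ) (m : ℤ), (digit m i = 1 ∨ digit m i = 2) →
      ∃ n : ℕ, psibar^[n] (Tg ^ m) = Tg := by
    intro i
    induction i with
    | zero =>
      intro m h
      rw [digit_zero] at h
      exact ⟨3, key12 m h⟩
    | succ i ih =>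
      intro m h
      rw [digit_succ] at h
      have h4 : m % 4 = 0 ∨ m % 4 = 1 ∨ m % 4 = 2 ∨ m % 4 = 3 := by omega
      rcases h4 with h4 | h4 | h4 | h4
      · obtain ⟨n, hn⟩ := ih (m/4) h
        exact ⟨n+3, by rw [Function.iterate_add_apply, key03 m (Or.inl h4)]; exact hn⟩
      · exact ⟨3, key12 m (Or.inl h4)⟩
      · exact ⟨3, key12 m (Or.inr h4)⟩
      · obtain ⟨n, hn⟩ := ih (m/4) h
        exact ⟨n+3, by rw [Function.iterate_add_apply, key03 m (Or.inr h4)]; exact hn⟩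
  have B : ∀ (N : ℕ) (m : ℤ), 0 ≤ m → m.toNat ≤ N →
      (∀ i : ℕ, digit m i = 0 ∨ digit m i = 3) →
      ∃ n : ℕ, psibar^[n] (Tg ^ m) = 1 := by
    intro N
    induction N with
    | zero =>
      intro m hm hN _
      have : m = 0 := by omega
      exact ⟨0, by simp [this]⟩
    | succ N ih =>
      intro m hm hN hd
      rcases eq_or_lt_of_le hm with h0 | h0
      · exact ⟨0, by simp [← h0]⟩
      · have h4 := hd 0
        rw [digit_zero] at h4
        obtain ⟨n, hn⟩ := ih (m/4) (by omega) (by omega)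
          (fun i => by rw [← digit_succ]; exact hd (i+1))
        exact ⟨n+3, by rw [Function.iterate_add_apply, key03 m h4]; exact hn⟩
  have C : ∀ (N : ℕ) (m : ℤ), m < 0 → (-m).toNat ≤ N →
      (∀ i : ℕ, digit m i = 0 ∨ digit m i = 3) →
      ∃ n : ℕ, psibar^[n] (Tg ^ m) = Tg⁻¹ := by
    intro N
    induction N with
    | zero => intro m hm hN _; omega
    | succ N ih =>
      intro m hm hN hd
      by_cases hm1 : m = -1
      · exact ⟨0, by rw [hm1]; exact zpow_neg_one Tg⟩
      · have h4 := hd 0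
        rw [digit_zero] at h4
        obtain ⟨n, hn⟩ := ih (m/4) (by omega) (by omega)
          (fun i => by rw [← digit_succ]; exact hd (i+1))
        exact ⟨n+3, by rw [Function.iterate_add_apply, key03 m h4]; exact hn⟩
  exact ⟨fun ⟨i, h⟩ => A i m h,
    fun hd hm => B m.toNat m hm le_rfl hd,
    fun hd hm => C (-m).toNat m hm le_rfl hd⟩
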